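/- Let G = (V, E) be a 3-regular finite simple graph with a fixed orientation (v_e⁻, v_e⁺) of each edge e, and consider the associated pricing instance. Let q be any pricing with q(v₀) = 0 such that q(v) ∉ {1, 2} for some v ∈ V. Then there exists a pricing q' with q'(v₀) = 0 whose profit is strictly greater than the profit of q. -/
import Mathlib


/-- A customer with bundle price `x` and budget `B` pays `x` if `x ≤ B` and `0`
otherwise (negative prices are allowed). -/
noncomputable def pay (x B : ℝ) : ℝ := if x ≤ B then x else 0

/-- The profit of the pricing instance associated with an oriented graph with
vertex items `V` (prices `qV`), edge items indexed by `E` (prices `qx`) and one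
extra item `v₀` (price `q0`): for each edge `e` there is one customer with bundle
`{v_e⁻, x_e}` and budget `2`, two customers with bundle `{v_e⁺, x_e}` and budget
`1`, and one customer with bundle `{v_e⁺, x_e}` and budget `3`; for each vertex
`v` there are ten customers with bundle `{v, v₀}` and budget `1` and ten with
budget `2`. -/
noncomputable def graphProfit {V E : Type*} [Fintype V] [Fintype E]
    (vm vp : E → V) (qV : V → ℝ) (qx : E → ℝ) (q0 : ℝ) : ℝ :=
  (∑ e : E, (pay (qV (vm e) + qx e) 2 + 2 * pay (qV (vp e) + qx e) 1 +
      pay (qV (vp e) + qx e) 3)) +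
    ∑ v : V, (10 * pay (qV v + q0) 1 + 10 * pay (qV v + q0) 2)

/-- The total payment of the four customers of one edge, where `a` is the price
of `v_e⁻`, `b` is the price of `v_e⁺` and `t` the price of the edge item. -/
noncomputable def edgeTerm (a b t : ℝ) : ℝ :=
  pay (a + t) 2 + 2 * pay (b + t) 1 + pay (b + t) 3

lemma graphProfit_eq {V E : Type*} [Fintype V] [Fintype E]
    (vm vp : E → V) (qV : V → ℝ) (qx : E → ℝ) (q0 : ℝ) :
    graphProfit vm vp qV qx q0 =
      (∑ e : E, edgeTerm (qV (vm e)) (qV (vp e)) (qx e)) +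
        ∑ v : V, (10 * pay (qV v + q0) 1 + 10 * pay (qV v + q0) 2) := rfl

lemma pay_sub_le (y δ B : ℝ) (hB : 0 < B) (hδ : 0 ≤ δ) :
    pay y B - δ ≤ pay (y - δ) B := by
  unfold pay; split_ifs <;> linarith

lemma pay_add_ge (y δ B : ℝ) (hB : 0 ≤ B) (hδ : 0 ≤ δ) :
    pay y B - B ≤ pay (y + δ) B := by
  unfold pay; split_ifs <;> linarith

lemma edgeTerm_vm_up (a b t σ : ℝ) (hσ : 0 ≤ σ) :
    edgeTerm a b t - 3 * σ ≤ edgeTerm (a + σ) b (t - σ) := by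
  unfold edgeTerm
  have h1 : a + σ + (t - σ) = a + t := by ring
  have h2 : b + (t - σ) = b + t - σ := by ring
  rw [h1, h2]
  have p1 := pay_sub_le (b + t) σ 1 one_pos hσ
  have p3 := pay_sub_le (b + t) σ 3 (by norm_num) hσ
  linarith

lemma edgeTerm_vp_up (a b t σ : ℝ) (hσ : 0 ≤ σ) :
    edgeTerm a b t - 3 * σ ≤ edgeTerm a (b + σ) (t - σ) := by
  unfold edgeTerm
  have h1 : b + σ + (t - σ) = b + t := by ring
  have h2 : a + (t - σ) = a + t - σ := by ring
  rw [h1, h2]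
  have p2 := pay_sub_le (a + t) σ 2 (by norm_num) hσ
  linarith

lemma edgeTerm_vm_down (a b t σ : ℝ) (hσ : σ ≤ 0) :
    edgeTerm a b t - 5 ≤ edgeTerm (a + σ) b (t - σ) := by
  unfold edgeTerm
  have h1 : a + σ + (t - σ) = a + t := by ring
  have h2 : b + (t - σ) = b + t + -σ := by ring
  rw [h1, h2]
  have p1 := pay_add_ge (b + t) (-σ) 1 (by norm_num) (by linarith)
  have p3 := pay_add_ge (b + t) (-σ) 3 (by norm_num) (by linarith)
  linarith

lemma edgeTerm_vp_down (a b t σ : ℝ) (hσ : σ ≤ 0) :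
    edgeTerm a b t - 5 ≤ edgeTerm a (b + σ) (t - σ) := by
  unfold edgeTerm
  have h1 : b + σ + (t - σ) = b + t := by ring
  have h2 : a + (t - σ) = a + t + -σ := by ring
  rw [h1, h2]
  have p2 := pay_add_ge (a + t) (-σ) 2 (by norm_num) (by linarith)
  linarith

/-- Updating the price of one vertex `v` to `p'` (and shifting the prices of the
three incident edge items accordingly) increases the profit, provided each
incident edge loses at most `K` and the vertex customers gain more than `3K`. -/
lemma profit_update {V E : Type*} [Fintype V] [Fintype E] [DecidableEq V]
    (vm vp : E → V) (qV : V → ℝ) (qx : E → ℝ) (v : V) (p' K : ℝ)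
    (hcard : (Finset.univ.filter (fun e : E => vm e = v ∨ vp e = v)).card = 3)
    (hK : ∀ e : E, (vm e = v ∨ vp e = v) →
      edgeTerm (qV (vm e)) (qV (vp e)) (qx e) - K ≤
        edgeTerm (Function.update qV v p' (vm e)) (Function.update qV v p' (vp e))
          (qx e - (p' - qV v)))
    (hgain : 3 * K + (10 * pay (qV v) 1 + 10 * pay (qV v) 2) <
        10 * pay p' 1 + 10 * pay p' 2) :
    graphProfit vm vp qV qx 0 <
      graphProfit vm vp (Function.update qV v p')
        (fun e => if vm e = v ∨ vp e = v then qx e - (p' - qV v) else qx e) 0 := by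
  classical
  rw [graphProfit_eq, graphProfit_eq]
  simp only [add_zero]
  have hE : ∑ e : E, edgeTerm (qV (vm e)) (qV (vp e)) (qx e)
      - ∑ e : E, (if vm e = v ∨ vp e = v then K else 0)
      ≤ ∑ e : E, edgeTerm (Function.update qV v p' (vm e))
          (Function.update qV v p' (vp e))
          (if vm e = v ∨ vp e = v then qx e - (p' - qV v) else qx e) := by
    rw [← Finset.sum_sub_distrib]
    apply Finset.sum_le_sum
    intro e _
    by_cases h : vm e = v ∨ vp e = v
    · simp only [h, if_true]
      exact hK e h
    · push_neg at h
      rw [Function.update_of_ne h.1, Function.update_of_ne h.2]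
      simp [h.1, h.2]
  have hcount : ∑ e : E, (if vm e = v ∨ vp e = v then K else 0) = 3 * K := by
    rw [Finset.sum_ite, Finset.sum_const, Finset.sum_const_zero, hcard]
    simp
  have hV : ∑ w : V, (10 * pay (Function.update qV v p' w) 1 +
        10 * pay (Function.update qV v p' w) 2)
      = ∑ w : V, (10 * pay (qV w) 1 + 10 * pay (qV w) 2)
        + ((10 * pay p' 1 + 10 * pay p' 2) -
            (10 * pay (qV v) 1 + 10 * pay (qV v) 2)) := by
    have key : ∀ w : V, (10 * pay (Function.update qV v p' w) 1 +
          10 * pay (Function.update qV v p' w) 2)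
        = (10 * pay (qV w) 1 + 10 * pay (qV w) 2)
          + (if w = v then ((10 * pay p' 1 + 10 * pay p' 2) -
              (10 * pay (qV v) 1 + 10 * pay (qV v) 2)) else 0) := by
      intro w
      by_cases hw : w = v
      · subst hw; simp [Function.update_self]
      · simp [Function.update_of_ne hw, hw]
    rw [Finset.sum_congr rfl (fun w _ => key w), Finset.sum_add_distrib,
      Finset.sum_ite_eq' Finset.univ v]
    simp
  rw [hV]
  rw [hcount] at hE
  linarith

/-- For a nonnegative shift `σ = p' - qV v ≥ 0` of the price of `v`
(compensated on the incident edge items), each incident edge loses at most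
`σ` per affected customer, hence at most `3σ` in total. -/
lemma hK_of_up {V E : Type*} [DecidableEq V] (vm vp : E → V)
    (hne : ∀ e : E, vm e ≠ vp e) (qV : V → ℝ) (qx : E → ℝ) (v : V) (p' : ℝ)
    (hσ : qV v ≤ p') :
    ∀ e : E, (vm e = v ∨ vp e = v) →
      edgeTerm (qV (vm e)) (qV (vp e)) (qx e) - 3 * (p' - qV v) ≤
        edgeTerm (Function.update qV v p' (vm e)) (Function.update qV v p' (vp e))
          (qx e - (p' - qV v)) := by
  intro e he
  set σ : ℝ := p' - qV v with hσdef
  have hσ0 : 0 ≤ σ := by simp [hσdef]; linarith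
  rcases he with h | h
  · have hvp : vp e ≠ v := fun hc => hne e (h.trans hc.symm)
    rw [h, Function.update_self, Function.update_of_ne hvp]
    have key := edgeTerm_vm_up (qV v) (qV (vp e)) (qx e) σ hσ0
    have : qV v + σ = p' := by rw [hσdef]; ring
    rwa [this] at key
  · have hvm : vm e ≠ v := fun hc => hne e (hc.trans h.symm)
    rw [h, Function.update_self, Function.update_of_ne hvm]
    have key := edgeTerm_vp_up (qV (vm e)) (qV v) (qx e) σ hσ0
    have : qV v + σ = p' := by rw [hσdef]; ring
    rwa [this] at key

/-- For a nonpositive shift `σ = p' - qV v ≤ 0` of the price of `v`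
(compensated on the incident edge items), each incident edge loses at most `5`. -/
lemma hK_of_down {V E : Type*} [DecidableEq V] (vm vp : E → V)
    (hne : ∀ e : E, vm e ≠ vp e) (qV : V → ℝ) (qx : E → ℝ) (v : V) (p' : ℝ)
    (hσ : p' ≤ qV v) :
    ∀ e : E, (vm e = v ∨ vp e = v) →
      edgeTerm (qV (vm e)) (qV (vp e)) (qx e) - 5 ≤
        edgeTerm (Function.update qV v p' (vm e)) (Function.update qV v p' (vp e))
          (qx e - (p' - qV v)) := by
  intro e he
  set σ : ℝ := p' - qV v with hσdef
  have hσ0 : σ ≤ 0 := by simp [hσdef]; linarith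
  rcases he with h | h
  · have hvp : vp e ≠ v := fun hc => hne e (h.trans hc.symm)
    rw [h, Function.update_self, Function.update_of_ne hvp]
    have key := edgeTerm_vm_down (qV v) (qV (vp e)) (qx e) σ hσ0
    have : qV v + σ = p' := by rw [hσdef]; ring
    rwa [this] at key
  · have hvm : vm e ≠ v := fun hc => hne e (hc.trans h.symm)
    rw [h, Function.update_self, Function.update_of_ne hvm]
    have key := edgeTerm_vp_down (qV (vm e)) (qV v) (qx e) σ hσ0
    have : qV v + σ = p' := by rw [hσdef]; ring
    rwa [this] at key

/-- in an optimal pricing every original vertex is priced 1 or 2.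
Let `G` be a 3-regular finite simple graph with a fixed orientation
`(vm e, vp e)` of each edge.  If `q` is a pricing of the associated instance with
`q(v₀) = 0` and `q(v) ∉ {1, 2}` for some vertex `v`, then there is a pricing `q'`
with `q'(v₀) = 0` of strictly larger profit. -/
theorem vertex_prices_one_or_two
    {V : Type*} [Fintype V] [DecidableEq V]
    (G : SimpleGraph V) [DecidableRel G.Adj] [Fintype G.edgeSet]
    (hreg : G.IsRegularOfDegree 3)
    (vm vp : G.edgeSet → V)
    (horient : ∀ e : G.edgeSet, (e : Sym2 V) = s(vm e, vp e))
    (qV : V → ℝ) (qx : G.edgeSet → ℝ)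
    (hbad : ∃ v : V, qV v ≠ 1 ∧ qV v ≠ 2) :
    ∃ (qV' : V → ℝ) (qx' : G.edgeSet → ℝ),
      graphProfit vm vp qV qx 0 < graphProfit vm vp qV' qx' 0 := by
  classical
  obtain ⟨v, h1, h2⟩ := hbad
  -- each edge joins two distinct vertices
  have hne : ∀ e : G.edgeSet, vm e ≠ vp e := by
    intro e
    have he := e.2
    rw [horient e] at he
    exact (G.mem_edgeSet.mp he).ne
  -- exactly three edges are incident to `v`
  have hcard : (Finset.univ.filter
      (fun e : G.edgeSet => vm e = v ∨ vp e = v)).card = 3 := by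
    have hmem : ∀ e : G.edgeSet, (vm e = v ∨ vp e = v) ↔ v ∈ (e : Sym2 V) := by
      intro e
      rw [horient e, Sym2.mem_iff]
      constructor
      · rintro (h | h) <;> [left; right] <;> exact h.symm
      · rintro (h | h) <;> [left; right] <;> exact h.symm
    have hfc : (Finset.univ.filter
        (fun e : G.edgeSet => vm e = v ∨ vp e = v)).card
        = Fintype.card {e : G.edgeSet // v ∈ (e : Sym2 V)} := by
      rw [Fintype.card_subtype]
      congr 1
      apply Finset.filter_congr
      intro e _
      simp [hmem e]
    have hequiv : {e : G.edgeSet // v ∈ (e : Sym2 V)} ≃ (G.incidenceSet v) :=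
      { toFun := fun e => ⟨e.1.1, e.1.2, e.2⟩
        invFun := fun e => ⟨⟨e.1, e.2.1⟩, e.2.2⟩
        left_inv := fun e => rfl
        right_inv := fun e => rfl }
    rw [hfc, Fintype.card_congr hequiv, SimpleGraph.card_incidenceSet_eq_degree]
    exact hreg v
  rcases lt_trichotomy (qV v) 1 with hA | hA | hA
  · -- case `qV v < 1` : raise the price of `v` to 1
    refine ⟨Function.update qV v 1,
      fun e => if vm e = v ∨ vp e = v then qx e - (1 - qV v) else qx e, ?_⟩
    apply profit_update vm vp qV qx v 1 (3 * (1 - qV v)) hcard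
      (hK_of_up vm vp hne qV qx v 1 (by linarith))
    have hpay1 : pay (qV v) 1 = qV v := by unfold pay; rw [if_pos (le_of_lt hA)]
    have hpay2 : pay (qV v) 2 = qV v := by unfold pay; rw [if_pos (by linarith)]
    have hq1 : pay (1 : ℝ) 1 = 1 := by unfold pay; norm_num
    have hq2 : pay (1 : ℝ) 2 = 1 := by unfold pay; norm_num
    rw [hpay1, hpay2, hq1, hq2]
    linarith
  · exact absurd hA h1
  rcases lt_trichotomy (qV v) 2 with hB | hB | hB
  · -- case `1 < qV v < 2` : raise the price of `v` to 2
    refine ⟨Function.update qV v 2,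
      fun e => if vm e = v ∨ vp e = v then qx e - (2 - qV v) else qx e, ?_⟩
    apply profit_update vm vp qV qx v 2 (3 * (2 - qV v)) hcard
      (hK_of_up vm vp hne qV qx v 2 (by linarith))
    have hpay1 : pay (qV v) 1 = 0 := by unfold pay; rw [if_neg (by linarith)]
    have hpay2 : pay (qV v) 2 = qV v := by unfold pay; rw [if_pos (le_of_lt hB)]
    have hq1 : pay (2 : ℝ) 1 = 0 := by unfold pay; norm_num
    have hq2 : pay (2 : ℝ) 2 = 2 := by unfold pay; norm_num
    rw [hpay1, hpay2, hq1, hq2]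
    linarith
  · exact absurd hB h2
  · -- case `2 < qV v` : lower the price of `v` to 2
    refine ⟨Function.update qV v 2,
      fun e => if vm e = v ∨ vp e = v then qx e - (2 - qV v) else qx e, ?_⟩
    apply profit_update vm vp qV qx v 2 5 hcard
      (hK_of_down vm vp hne qV qx v 2 (by linarith))
    have hpay1 : pay (qV v) 1 = 0 := by unfold pay; rw [if_neg (by linarith)]
    have hpay2 : pay (qV v) 2 = 0 := by unfold pay; rw [if_neg (by linarith)]
    have hq1 : pay (2 : ℝ) 1 = 0 := by unfold pay; norm_num
    have hq2 : pay (2 : ℝ) 2 = 2 := by unfold pay; norm_num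
    rw [hpay1, hpay2, hq1, hq2]
    linarith
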